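/- Let G be a finite simple graph on n ≥ 2 vertices that is not the complete graph K_n, and let R be a real with √((n−1)/n) < R ≤ 1. Then there is exactly one real x > √2 satisfying both: (i) C_G(s) ≠ 0 for all s in the open interval (1, x²/2), and (ii) G admits a two-distance representation in ℝ^{n−1} with distances √2 and x whose image lies on a sphere of radius R (there is a point c with dist(c, f v) = R for every vertex v). -/

import Mathlib

open scoped Classical RealInnerProductSpace

noncomputable section

/-- A two-distance representation of a simple graph `G` in `ℝ^d`
(`= EuclideanSpace ℝ (Fin d)`) with distances `a` and `b`, `0 < a ≤ b`: adjacent vertices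
are mapped to points at distance `a`, distinct non-adjacent vertices to points at
distance `b`. -/
def IsTwoDistRep {V : Type*} (G : SimpleGraph V) {d : ℕ}
    (f : V → EuclideanSpace ℝ (Fin d)) (a b : ℝ) : Prop :=
  0 < a ∧ a ≤ b ∧
    (∀ u v, G.Adj u v → dist (f u) (f v) = a) ∧
    (∀ u v, u ≠ v → ¬ G.Adj u v → dist (f u) (f v) = b)

/-- The Euclidean representation number `dim^E_2(G)`: the smallest `d` such that `G` has a
two-distance representation in `ℝ^d`. -/
def dimE2 {V : Type*} (G : SimpleGraph V) : ℕ :=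
  sInf {d | ∃ (f : V → EuclideanSpace ℝ (Fin d)) (a b : ℝ), IsTwoDistRep G f a b}

/-- The spherical representation number `dim^S_2(G)`: the smallest `d` such that `G` has a
two-distance representation in `ℝ^d` whose image lies on a sphere. -/
def dimS2 {V : Type*} (G : SimpleGraph V) : ℕ :=
  sInf {d | ∃ (f : V → EuclideanSpace ℝ (Fin d)) (a b : ℝ)
      (c : EuclideanSpace ℝ (Fin d)) (r : ℝ),
    IsTwoDistRep G f a b ∧ ∀ v, dist c (f v) = r}

/-- The J-spherical representation number `dim^J_2(G)`: the smallest `d` such that `G` has a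
two-distance representation in `ℝ^d` with distances `√2` and `b` (`√2 ≤ b`) whose image lies
on the unit sphere centered at the origin. -/
def dimJ2 {V : Type*} (G : SimpleGraph V) : ℕ :=
  sInf {d | ∃ (f : V → EuclideanSpace ℝ (Fin d)) (b : ℝ),
    IsTwoDistRep G f (Real.sqrt 2) b ∧ ∀ v, ‖f v‖ = 1}

/-- `β_*(G)`: the second distance of the (unique) J-spherical representation of `G` in
dimension `dimJ2 G`. -/
def betaStar {V : Type*} (G : SimpleGraph V) : ℝ :=
  sInf {b : ℝ | ∃ f : V → EuclideanSpace ℝ (Fin (dimJ2 G)),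
    IsTwoDistRep G f (Real.sqrt 2) b ∧ ∀ v, ‖f v‖ = 1}

/-- The Cayley–Menger matrix of a graph, with entries in `ℝ[X]`: the extra index `none`
gives the row and column of `1`s (with `0` in the corner), and for distinct vertices `u, v`
the entry is `1` if they are adjacent and `X` (the variable `t`) otherwise. -/
def cmMatrix {V : Type*} [Fintype V] (G : SimpleGraph V) :
    Matrix (Option V) (Option V) (Polynomial ℝ) := fun i j =>
  match i, j with
  | none, none => 0
  | none, some _ => 1
  | some _, none => 1
  | some u, some v => if u = v then 0 else if G.Adj u v then 1 else Polynomial.X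

/-- The Cayley–Menger polynomial `C_G(t)`. -/
def CG {V : Type*} [Fintype V] (G : SimpleGraph V) : Polynomial ℝ :=
  (cmMatrix G).det

/-- The matrix defining `M_G`. -/
def mMatrix {V : Type*} [Fintype V] (G : SimpleGraph V) :
    Matrix V V (Polynomial ℝ) := fun u v =>
  if u = v then 0 else if G.Adj u v then 1 else Polynomial.X

/-- The polynomial `M_G(t)`. -/
def MG {V : Type*} [Fintype V] (G : SimpleGraph V) : Polynomial ℝ :=
  (mMatrix G).det

/-- `C_G` has a root greater than `1` (i.e. `τ₁(G) < ∞`). -/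
def HasTau {V : Type*} [Fintype V] (G : SimpleGraph V) : Prop :=
  ∃ t : ℝ, 1 < t ∧ (CG G).eval t = 0

/-- `τ₁(G)`: the smallest root of `C_G` greater than `1` (junk value if none exists). -/
def tau1 {V : Type*} [Fintype V] (G : SimpleGraph V) : ℝ :=
  sInf {t : ℝ | 1 < t ∧ (CG G).eval t = 0}

/-- `μ(G)`: the multiplicity of `τ₁(G)` as a root of `C_G`, and `0` if `C_G` has no
root greater than `1`. -/
def muG {V : Type*} [Fintype V] (G : SimpleGraph V) : ℕ :=
  if HasTau G then (CG G).rootMultiplicity (tau1 G) else 0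

/-- `F_G = -M_G / (2 C_G)`, viewed as a rational function of `t`. -/
def FG {V : Type*} [Fintype V] (G : SimpleGraph V) : RatFunc ℝ :=
  RatFunc.mk (-(MG G)) (2 * CG G)

/-- The rational function `F_G` has no pole at `τ₁(G)`: the denominator of the reduced
fraction does not vanish there. -/
def NoPoleAtTau {V : Type*} [Fintype V] (G : SimpleGraph V) : Prop :=
  (FG G).denom.eval (tau1 G) ≠ 0

/-- The value `F_G(τ₁(G))` of the rational function `F_G` at `τ₁(G)`. -/
def FGtau {V : Type*} [Fintype V] (G : SimpleGraph V) : ℝ :=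
  (FG G).eval (RingHom.id ℝ) (tau1 G)

/-- The circumradius `R(G)` is finite: `τ₁(G) < ∞` and `F_G` has no pole at `τ₁(G)`.
(Then `R(G) = √(F_G(τ₁(G)))`.) -/
def RGfin {V : Type*} [Fintype V] (G : SimpleGraph V) : Prop :=
  HasTau G ∧ NoPoleAtTau G

/-- The value of `F_G` at a point `t` which is not a root of `C_G`. -/
def FGval {V : Type*} [Fintype V] (G : SimpleGraph V) (t : ℝ) : ℝ :=
  -((MG G).eval t) / (2 * (CG G).eval t)

/-- `dim^S_2(G, R₀)`: the smallest `d` such that `G` has a two-distance representation in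
`ℝ^d` with distances `1` and `b` whose image lies on a sphere of radius at most `R₀`. -/
def dimS2R {V : Type*} (G : SimpleGraph V) (R₀ : ℝ) : ℕ :=
  sInf {d | ∃ (f : V → EuclideanSpace ℝ (Fin d)) (b : ℝ)
      (c : EuclideanSpace ℝ (Fin d)) (r : ℝ),
    IsTwoDistRep G f 1 b ∧ r ≤ R₀ ∧ ∀ v, dist c (f v) = r}

/-- The join of two graphs: their disjoint union together with all edges between the parts. -/
def graphJoin {V₁ V₂ : Type} (G₁ : SimpleGraph V₁) (G₂ : SimpleGraph V₂) :
    SimpleGraph (V₁ ⊕ V₂) :=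
  SimpleGraph.fromRel fun x y =>
    (∃ a b, x = Sum.inl a ∧ y = Sum.inl b ∧ G₁.Adj a b) ∨
    (∃ a b, x = Sum.inr a ∧ y = Sum.inr b ∧ G₂.Adj a b) ∨
    (∃ a b, x = Sum.inl a ∧ y = Sum.inr b)

/-- The join of a family of graphs: two vertices are adjacent iff they lie in different
summands or are adjacent within their common summand. -/
def familyJoin {ι : Type*} {V : ι → Type*} (G : ∀ i, SimpleGraph (V i)) :
    SimpleGraph (Σ i, V i) :=
  SimpleGraph.fromRel fun x y =>
    x.1 ≠ y.1 ∨ ∃ h : x.1 = y.1, (G y.1).Adj (h ▸ x.2) y.2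

/-- A graph is join-indecomposable if it is not isomorphic to a join of two graphs,
each having at least one vertex. -/
def JoinIndecomposable {V : Type} (G : SimpleGraph V) : Prop :=
  ¬ ∃ (V₁ V₂ : Type) (G₁ : SimpleGraph V₁) (G₂ : SimpleGraph V₂),
      Nonempty V₁ ∧ Nonempty V₂ ∧ Nonempty (G ≃g graphJoin G₁ G₂)

/-- `S` is of Type I in the linear subspace `L`: all points have norm `1`,
`|S| = dim L + 1`, the affine hull of `S` has dimension `dim L`, and the origin lies in the
relative interior of the convex hull of `S`. -/
def TypeI {d : ℕ} (L : Submodule ℝ (EuclideanSpace ℝ (Fin d)))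
    (S : Finset (EuclideanSpace ℝ (Fin d))) : Prop :=
  (↑S : Set (EuclideanSpace ℝ (Fin d))) ⊆ (L : Set (EuclideanSpace ℝ (Fin d))) ∧
  (∀ p ∈ S, ‖p‖ = 1) ∧
  S.card = Module.finrank ℝ L + 1 ∧
  Module.finrank ℝ (affineSpan ℝ (↑S : Set (EuclideanSpace ℝ (Fin d)))).direction =
    Module.finrank ℝ L ∧
  (0 : EuclideanSpace ℝ (Fin d)) ∈
    intrinsicInterior ℝ (convexHull ℝ (↑S : Set (EuclideanSpace ℝ (Fin d))))

/-- `S` is of Type II in the linear subspace `L`: all points have norm `1`,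
`|S| = dim L`, the affine hull of `S` has dimension `dim L - 1`, and the origin does not lie
in the affine hull of `S`. -/
def TypeII {d : ℕ} (L : Submodule ℝ (EuclideanSpace ℝ (Fin d)))
    (S : Finset (EuclideanSpace ℝ (Fin d))) : Prop :=
  (↑S : Set (EuclideanSpace ℝ (Fin d))) ⊆ (L : Set (EuclideanSpace ℝ (Fin d))) ∧
  (∀ p ∈ S, ‖p‖ = 1) ∧
  S.card = Module.finrank ℝ L ∧
  Module.finrank ℝ (affineSpan ℝ (↑S : Set (EuclideanSpace ℝ (Fin d)))).direction =
    Module.finrank ℝ L - 1 ∧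
  (0 : EuclideanSpace ℝ (Fin d)) ∉ affineSpan ℝ (↑S : Set (EuclideanSpace ℝ (Fin d)))

/-- A J-spherical two-distance (JSTD) set with second distance `b`: a finite set on the unit
sphere centered at the origin whose pairwise distances take exactly the two values `√2` and
`b`, where `b > √2`. -/
def IsJSTD {d : ℕ} (S : Finset (EuclideanSpace ℝ (Fin d))) (b : ℝ) : Prop :=
  (∀ p ∈ S, ‖p‖ = 1) ∧ Real.sqrt 2 < b ∧
  (∀ p ∈ S, ∀ q ∈ S, p ≠ q → dist p q = Real.sqrt 2 ∨ dist p q = b) ∧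
  (∃ p ∈ S, ∃ q ∈ S, dist p q = Real.sqrt 2) ∧
  (∃ p ∈ S, ∃ q ∈ S, dist p q = b)

/-! ### Auxiliary material for Statement 7 -/

open Matrix Finset

namespace Stmt7Aux

variable {n : ℕ}

/-- The inner matrix with distances squared over two: `0` diagonal, `1` on edges,
`t` on non-edges. -/
def qmat (G : SimpleGraph (Fin n)) (t : ℝ) : Matrix (Fin n) (Fin n) ℝ := fun u v =>
  if u = v then 0 else if G.Adj u v then 1 else t

/-- The candidate Gram matrix `R² J - qmat`. -/
def mmat (G : SimpleGraph (Fin n)) (R t : ℝ) : Matrix (Fin n) (Fin n) ℝ := fun u v =>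
  R ^ 2 - qmat G t u v

/-- Complement adjacency matrix. -/
def abar (G : SimpleGraph (Fin n)) : Matrix (Fin n) (Fin n) ℝ := fun u v =>
  if u = v then 0 else if G.Adj u v then 0 else 1

/-- Quadratic form of a matrix. -/
def qf (M : Matrix (Fin n) (Fin n) ℝ) (x : Fin n → ℝ) : ℝ := x ⬝ᵥ (M *ᵥ x)

lemma qf_expand (M : Matrix (Fin n) (Fin n) ℝ) (x : Fin n → ℝ) :
    qf M x = ∑ u, ∑ v, x u * (M u v * x v) := by
  simp [qf, dotProduct, mulVec, Finset.mul_sum]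

lemma mmat_symm (G : SimpleGraph (Fin n)) (R t : ℝ) (u v : Fin n) :
    mmat G R t u v = mmat G R t v u := by
  rcases eq_or_ne u v with h | h
  · rw [h]
  · by_cases ha : G.Adj u v
    · simp [mmat, qmat, h, h.symm, ha, G.adj_comm u v |>.mp ha]
    · have ha' : ¬ G.Adj v u := fun hc => ha ((G.adj_comm v u).mp hc)
      simp [mmat, qmat, h, h.symm, ha, ha']

lemma mmat_isHermitian (G : SimpleGraph (Fin n)) (R t : ℝ) : (mmat G R t).IsHermitian := by
  refine Matrix.ext fun u v => ?_
  simp [Matrix.conjTranspose_apply, mmat_symm G R t v u]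

lemma mmat_one_apply (G : SimpleGraph (Fin n)) (R : ℝ) (u v : Fin n) :
    mmat G R 1 u v = (R ^ 2 - 1) + (if u = v then 1 else 0) := by
  rcases eq_or_ne u v with h | h
  · simp [mmat, qmat, h]
  · by_cases ha : G.Adj u v <;> simp [mmat, qmat, h, ha]

lemma mmat_affine (G : SimpleGraph (Fin n)) (R t : ℝ) :
    mmat G R t = mmat G R 1 - (t - 1) • abar G := by
  funext u v
  rcases eq_or_ne u v with h | h
  · simp [mmat, qmat, abar, h]
  · by_cases ha : G.Adj u v <;> simp [mmat, qmat, abar, h, ha] <;> ring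

lemma qf_affine (G : SimpleGraph (Fin n)) (R t : ℝ) (x : Fin n → ℝ) :
    qf (mmat G R t) x = qf (mmat G R 1) x - (t - 1) * qf (abar G) x := by
  rw [qf, mmat_affine G R t, Matrix.sub_mulVec, dotProduct_sub]
  rw [Matrix.smul_mulVec, dotProduct_smul, smul_eq_mul]
  rfl

lemma qf_one (G : SimpleGraph (Fin n)) (R : ℝ) (x : Fin n → ℝ) :
    qf (mmat G R 1) x = (R ^ 2 - 1) * (∑ u, x u) ^ 2 + ∑ u, x u ^ 2 := by
  rw [qf_expand]
  have h : ∀ u : Fin n, ∑ v, x u * (mmat G R 1 u v * x v)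
      = (R ^ 2 - 1) * (x u * ∑ v, x v) + x u ^ 2 := by
    intro u
    have hv : ∀ v : Fin n, x u * (mmat G R 1 u v * x v)
        = (R ^ 2 - 1) * (x u * x v) + (if u = v then x u * x v else 0) := by
      intro v
      rw [mmat_one_apply]
      rcases eq_or_ne u v with h | h <;> simp [h] <;> ring
    simp_rw [hv]
    rw [Finset.sum_add_distrib, ← Finset.mul_sum, ← Finset.mul_sum, Finset.sum_ite_eq]
    simp [sq]
  simp_rw [h]
  rw [Finset.sum_add_distrib, ← Finset.mul_sum, ← Finset.sum_mul]
  ring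

lemma qf_split (G : SimpleGraph (Fin n)) (R t : ℝ) (x : Fin n → ℝ) :
    qf (mmat G R t) x = R ^ 2 * (∑ u, x u) ^ 2 - x ⬝ᵥ (qmat G t *ᵥ x) := by
  simp only [qf, dotProduct, mulVec, mmat, sub_mul, Finset.sum_sub_distrib, mul_sub,
    ← Finset.mul_sum]
  rw [← Finset.sum_mul]
  ring

lemma qf_pair (M : Matrix (Fin n) (Fin n) ℝ) (u v : Fin n) :
    qf M (fun w => (if w = u then 1 else 0) + if w = v then 1 else 0)
      = M u u + M u v + M v u + M v v := by
  simp only [qf, dotProduct, mulVec, mul_add, add_mul, Finset.sum_add_distrib, mul_ite,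
    ite_mul, mul_zero, zero_mul, mul_one, one_mul, Finset.sum_ite_eq', Finset.mem_univ,
    if_true]
  ring

lemma sum_sq_pos {x : Fin n → ℝ} (hx : x ≠ 0) : 0 < ∑ i, x i ^ 2 := by
  obtain ⟨i, hi⟩ := Function.ne_iff.mp hx
  have : 0 < x i ^ 2 := by
    have := pow_pos (abs_pos.mpr hi) 2
    rwa [sq_abs] at this
  exact Finset.sum_pos' (fun j _ => sq_nonneg _) ⟨i, Finset.mem_univ i, this⟩

lemma sq_sum_le (x : Fin n → ℝ) : (∑ u, x u) ^ 2 ≤ (n : ℝ) * ∑ i, x i ^ 2 := by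
  have := Finset.sum_mul_sq_le_sq_mul_sq univ x (fun _ => (1 : ℝ))
  simpa [mul_comm] using this

lemma abs_abar_le (G : SimpleGraph (Fin n)) (u v : Fin n) : |abar G u v| ≤ 1 := by
  unfold abar; split_ifs <;> norm_num

lemma qf_abar_le (G : SimpleGraph (Fin n)) (x : Fin n → ℝ) :
    qf (abar G) x ≤ (n : ℝ) * ∑ i, x i ^ 2 := by
  have h1 : qf (abar G) x ≤ ∑ u, ∑ v, |x u| * |x v| := by
    rw [qf_expand]
    refine Finset.sum_le_sum fun u _ => Finset.sum_le_sum fun v _ => ?_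
    calc x u * (abar G u v * x v) ≤ |x u * (abar G u v * x v)| := le_abs_self _
      _ = |x u| * (|abar G u v| * |x v|) := by rw [abs_mul, abs_mul]
      _ ≤ |x u| * (1 * |x v|) := by gcongr; exact abs_abar_le G u v
      _ = |x u| * |x v| := by ring
  have h2 : ∑ u, ∑ v, |x u| * |x v| = (∑ u, |x u|) ^ 2 := by
    rw [sq, Finset.sum_mul_sum]
  have h3 : (∑ u, |x u|) ^ 2 ≤ (n : ℝ) * ∑ i, x i ^ 2 := by
    have := Finset.sum_mul_sq_le_sq_mul_sq univ (fun i => |x i|) (fun _ => (1 : ℝ))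
    simpa [sq_abs, mul_comm] using this
  linarith

lemma hc_pos {R : ℝ} (hn : 2 ≤ n) (hR1 : Real.sqrt (((n : ℝ) - 1) / n) < R) :
    0 < (n : ℝ) * R ^ 2 - ((n : ℝ) - 1) := by
  have hn0 : (0 : ℝ) < n := by
    have : 0 < n := by omega
    exact_mod_cast this
  have hR0 : 0 < R := lt_of_le_of_lt (Real.sqrt_nonneg _) hR1
  have hfrac : ((n : ℝ) - 1) / n < R ^ 2 := (Real.sqrt_lt' hR0).mp hR1
  have := (div_lt_iff₀ hn0).mp hfrac
  nlinarith

lemma qf_one_ge {R : ℝ} (G : SimpleGraph (Fin n)) (hR0 : 0 < R) (hR2 : R ≤ 1)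
    (x : Fin n → ℝ) :
    ((n : ℝ) * R ^ 2 - ((n : ℝ) - 1)) * ∑ i, x i ^ 2 ≤ qf (mmat G R 1) x := by
  rw [qf_one]
  have h1 := sq_sum_le x
  have h2 : R ^ 2 - 1 ≤ 0 := by nlinarith
  have key : (R ^ 2 - 1) * ((n : ℝ) * ∑ i, x i ^ 2) ≤ (R ^ 2 - 1) * (∑ u, x u) ^ 2 :=
    mul_le_mul_of_nonpos_left h1 h2
  nlinarith

/-- The set of `t ≥ 1` where the candidate Gram matrix is positive semidefinite. -/
def SS (G : SimpleGraph (Fin n)) (R : ℝ) : Set ℝ :=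
  {t | 1 ≤ t ∧ ∀ x : Fin n → ℝ, 0 ≤ qf (mmat G R t) x}

/-- The threshold value `t*`. -/
def tstar (G : SimpleGraph (Fin n)) (R : ℝ) : ℝ := sSup (SS G R)

end Stmt7Aux

namespace Stmt7Aux

variable {n : ℕ} {G : SimpleGraph (Fin n)} {R : ℝ}

section Main

lemma hR0 (hR1 : Real.sqrt (((n : ℝ) - 1) / n) < R) : 0 < R :=
  lt_of_le_of_lt (Real.sqrt_nonneg _) hR1

lemma one_mem_SS (hn : 2 ≤ n) (hR1 : Real.sqrt (((n : ℝ) - 1) / n) < R) (hR2 : R ≤ 1) : (1 : ℝ) ∈ SS G R := by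
  refine ⟨le_refl _, fun x => ?_⟩
  have := qf_one_ge G (hR0 hR1) hR2 x
  have hc := hc_pos hn hR1
  nlinarith [Finset.sum_nonneg (fun i (_ : i ∈ univ) => sq_nonneg (x i))]

lemma exists_nonadj (hG : G ≠ ⊤) : ∃ u v : Fin n, u ≠ v ∧ ¬ G.Adj u v := by
  by_contra h
  push_neg at h
  exact hG (SimpleGraph.ext (by
    ext u v
    simp only [SimpleGraph.top_adj]
    exact ⟨fun h' => G.ne_of_adj h', fun hne => h u v hne⟩))

lemma SS_le_two (hG : G ≠ ⊤) (hR1 : Real.sqrt (((n : ℝ) - 1) / n) < R) (hR2 : R ≤ 1) : ∀ t ∈ SS G R, t ≤ 2 := by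
  intro t ht
  obtain ⟨u, v, huv, hna⟩ := exists_nonadj hG
  have h := ht.2 (fun w => (if w = u then 1 else 0) + if w = v then 1 else 0)
  rw [qf_pair] at h
  have h1 : mmat G R t u u = R ^ 2 := by simp [mmat, qmat]
  have h2 : mmat G R t v v = R ^ 2 := by simp [mmat, qmat]
  have h3 : mmat G R t u v = R ^ 2 - t := by simp [mmat, qmat, huv, hna]
  have h4 : mmat G R t v u = R ^ 2 - t := by
    rw [← mmat_symm]; exact h3
  rw [h1, h2, h3, h4] at h
  have hR0' := hR0 hR1
  nlinarith

lemma SS_bddAbove (hG : G ≠ ⊤) (hR1 : Real.sqrt (((n : ℝ) - 1) / n) < R) (hR2 : R ≤ 1) : BddAbove (SS G R) :=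
  ⟨2, fun t ht => SS_le_two hG hR1 hR2 t ht⟩

lemma SS_closed : IsClosed (SS G R) := by
  have hset : SS G R = Set.Ici (1 : ℝ) ∩
      ⋂ x : Fin n → ℝ, {t : ℝ | 0 ≤ qf (mmat G R 1) x - (t - 1) * qf (abar G) x} := by
    ext t
    simp only [SS, Set.mem_setOf_eq, Set.mem_inter_iff, Set.mem_Ici, Set.mem_iInter]
    constructor
    · rintro ⟨h1, h2⟩
      exact ⟨h1, fun x => by rw [← qf_affine]; exact h2 x⟩
    · rintro ⟨h1, h2⟩
      exact ⟨h1, fun x => by rw [qf_affine]; exact h2 x⟩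
  rw [hset]
  refine isClosed_Ici.inter (isClosed_iInter fun x => isClosed_le continuous_const ?_)
  exact continuous_const.sub ((continuous_id.sub continuous_const).mul continuous_const)

lemma tstar_mem (hn : 2 ≤ n) (hG : G ≠ ⊤) (hR1 : Real.sqrt (((n : ℝ) - 1) / n) < R) (hR2 : R ≤ 1) : tstar G R ∈ SS G R :=
  (SS_closed).csSup_mem ⟨1, one_mem_SS hn hR1 hR2⟩ (SS_bddAbove hG hR1 hR2)

lemma tstar_gt_one (hn : 2 ≤ n) (hG : G ≠ ⊤) (hR1 : Real.sqrt (((n : ℝ) - 1) / n) < R) (hR2 : R ≤ 1) : 1 < tstar G R := by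
  have hc := hc_pos hn hR1
  set c : ℝ := (n : ℝ) * R ^ 2 - ((n : ℝ) - 1) with hcdef
  have hn0 : (0 : ℝ) < n := by
    have : 0 < n := by omega
    exact_mod_cast this
  have hmem : 1 + c / n ∈ SS G R := by
    constructor
    · have : 0 < c / n := div_pos hc hn0
      linarith
    · intro x
      rw [qf_affine]
      have h1 := qf_one_ge G (hR0 hR1) hR2 x
      have h2 := qf_abar_le G x
      have hs : (0:ℝ) ≤ ∑ i, x i ^ 2 :=
        Finset.sum_nonneg (fun i _ => sq_nonneg (x i))
      have heq : (1 + c / n - 1) = c / n := by ring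
      rw [heq]
      have hcn : 0 < c / n := div_pos hc hn0
      have : (c / n) * qf (abar G) x ≤ (c / n) * ((n : ℝ) * ∑ i, x i ^ 2) :=
        mul_le_mul_of_nonneg_left h2 (le_of_lt hcn)
      have hmul : (c / n) * ((n : ℝ) * ∑ i, x i ^ 2) = c * ∑ i, x i ^ 2 := by
        field_simp
      linarith
  have : 1 + c / n ≤ tstar G R := le_csSup (SS_bddAbove hG hR1 hR2) hmem
  have : 0 < c / n := div_pos hc hn0
  linarith [le_csSup (SS_bddAbove hG hR1 hR2) hmem]

/-- Positive definiteness strictly below `t*`. -/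
lemma pd_of_lt (hn : 2 ≤ n) (hG : G ≠ ⊤) (hR1 : Real.sqrt (((n : ℝ) - 1) / n) < R) (hR2 : R ≤ 1) {s : ℝ} (h1 : 1 ≤ s) (h2 : s < tstar G R) {x : Fin n → ℝ} (hx : x ≠ 0) :
    0 < qf (mmat G R s) x := by
  have hSx := sum_sq_pos hx
  have hq1 : 0 < qf (mmat G R 1) x := by
    have := qf_one_ge G (hR0 hR1) hR2 x
    have hc := hc_pos hn hR1
    nlinarith
  have es := qf_affine G R s x
  have et := qf_affine G R (tstar G R) x
  have htm := (tstar_mem hn hG hR1 hR2).2 x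
  rcases le_or_gt (qf (abar G) x) 0 with ha | ha
  · nlinarith
  · nlinarith [mul_pos (sub_pos.mpr h2) ha]

end Main

end Stmt7Aux

namespace Stmt7Aux

variable {n : ℕ} {G : SimpleGraph (Fin n)} {R : ℝ}

lemma qf_smul (M : Matrix (Fin n) (Fin n) ℝ) (c : ℝ) (x : Fin n → ℝ) :
    qf M (c • x) = c ^ 2 * qf M x := by
  simp only [qf, Matrix.mulVec_smul, smul_dotProduct, dotProduct_smul, smul_eq_mul]
  ring

lemma norm_sq_eq (x : EuclideanSpace ℝ (Fin n)) : ‖x‖ ^ 2 = ∑ i, x i ^ 2 := by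
  rw [EuclideanSpace.norm_eq, Real.sq_sqrt]
  · simp [Real.norm_eq_abs, sq_abs]
  · exact Finset.sum_nonneg fun i _ => sq_nonneg _

/-- A quantitative bound for positive definite quadratic forms, by compactness. -/
lemma pd_bound (hn : 2 ≤ n) {M : Matrix (Fin n) (Fin n) ℝ}
    (hpd : ∀ x : Fin n → ℝ, x ≠ 0 → 0 < qf M x) :
    ∃ c > 0, ∀ x : Fin n → ℝ, c * ∑ i, x i ^ 2 ≤ qf M x := by
  have hcont : Continuous fun y : EuclideanSpace ℝ (Fin n) => qf M y := by
    simp only [qf_expand]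
    refine continuous_finset_sum _ fun u _ => continuous_finset_sum _ fun v _ => ?_
    have happ : ∀ w : Fin n, Continuous fun y : EuclideanSpace ℝ (Fin n) => y w :=
      fun w => (EuclideanSpace.proj w : EuclideanSpace ℝ (Fin n) →L[ℝ] ℝ).continuous
    exact (happ u).mul (continuous_const.mul (happ v))
  haveI : Nontrivial (EuclideanSpace ℝ (Fin n)) := by
    refine nontrivial_of_ne (EuclideanSpace.single ⟨0, by omega⟩ (1 : ℝ)) 0 ?_
    intro hcontra
    have := congrArg (fun z => ‖z‖) hcontra
    simp [EuclideanSpace.norm_single] at this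
  have hne : (Metric.sphere (0 : EuclideanSpace ℝ (Fin n)) 1).Nonempty :=
    NormedSpace.sphere_nonempty.mpr zero_le_one
  obtain ⟨x₀, hx₀mem, hmin⟩ :=
    (isCompact_sphere (0 : EuclideanSpace ℝ (Fin n)) 1).exists_isMinOn hne hcont.continuousOn
  have hx₀norm : ‖x₀‖ = 1 := by simpa using hx₀mem
  have hx₀ne : x₀ ≠ 0 := by
    intro h; rw [h] at hx₀norm; simp at hx₀norm
  refine ⟨qf M x₀, hpd x₀ (by intro h; apply hx₀ne; simpa using congrArg (WithLp.toLp 2) h), fun x => ?_⟩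
  rcases eq_or_ne x 0 with rfl | hx
  · simp [qf]
  · set xE : EuclideanSpace ℝ (Fin n) := WithLp.toLp 2 x with hxE
    have hxEne : xE ≠ 0 := fun h => hx (by simpa [hxE] using congrArg WithLp.ofLp h)
    have hr : 0 < ‖xE‖ := norm_pos_iff.mpr hxEne
    have hy : (‖xE‖⁻¹ • xE : EuclideanSpace ℝ (Fin n)) ∈
        Metric.sphere (0 : EuclideanSpace ℝ (Fin n)) 1 := by
      simp [norm_smul, abs_of_pos (inv_pos.mpr hr), inv_mul_cancel₀ (ne_of_gt hr)]
    have hle : qf M x₀ ≤ qf M (‖xE‖⁻¹ • xE) := hmin hy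
    have hqy : qf M (‖xE‖⁻¹ • xE) = (‖xE‖⁻¹) ^ 2 * qf M x := qf_smul M _ x
    have hnx : ‖xE‖ ^ 2 = ∑ i, x i ^ 2 := norm_sq_eq xE
    rw [hqy] at hle
    have h2 : qf M x₀ * ‖xE‖ ^ 2 ≤ qf M x := by
      have hinv : (‖xE‖⁻¹) ^ 2 * ‖xE‖ ^ 2 = 1 := by
        field_simp
      nlinarith [sq_nonneg ‖xE‖, hpd x hx]
    rw [← hnx]
    linarith [h2]

end Stmt7Aux

namespace Stmt7Aux

variable {n : ℕ} {G : SimpleGraph (Fin n)} {R : ℝ}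

lemma tstar_psd (hn : 2 ≤ n) (hG : G ≠ ⊤) (hR1 : Real.sqrt (((n : ℝ) - 1) / n) < R)
    (hR2 : R ≤ 1) : (mmat G R (tstar G R)).PosSemidef := by
  refine Matrix.posSemidef_iff_dotProduct_mulVec.mpr ⟨mmat_isHermitian G R _, fun x => ?_⟩
  have hsx : star x = x := funext fun _ => rfl
  rw [hsx]
  exact (tstar_mem hn hG hR1 hR2).2 x

lemma exists_kernel (hn : 2 ≤ n) (hG : G ≠ ⊤) (hR1 : Real.sqrt (((n : ℝ) - 1) / n) < R)
    (hR2 : R ≤ 1) :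
    ∃ v : Fin n → ℝ, v ≠ 0 ∧ mmat G R (tstar G R) *ᵥ v = 0 := by
  by_contra hcon
  push_neg at hcon
  have hpsd := tstar_psd hn hG hR1 hR2
  have hpd : ∀ x : Fin n → ℝ, x ≠ 0 → 0 < qf (mmat G R (tstar G R)) x := by
    intro x hx
    have h0 : 0 ≤ qf (mmat G R (tstar G R)) x := (tstar_mem hn hG hR1 hR2).2 x
    rcases h0.lt_or_eq with h | h
    · exact h
    · exfalso
      have hzero : star x ⬝ᵥ mmat G R (tstar G R) *ᵥ x = 0 := by
        have hsx : star x = x := funext fun _ => rfl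
        rw [hsx]; exact h.symm
      exact hcon x hx ((hpsd.dotProduct_mulVec_zero_iff x).mp hzero)
  obtain ⟨c, hc, hbound⟩ := pd_bound hn hpd
  have hn0 : (0 : ℝ) < n := by
    have : 0 < n := by omega
    exact_mod_cast this
  have hcn : 0 < c / n := div_pos hc hn0
  have hmem : tstar G R + c / n ∈ SS G R := by
    constructor
    · have h1 := tstar_gt_one hn hG hR1 hR2
      linarith
    · intro x
      have e1 := qf_affine G R (tstar G R) x
      have e2 := qf_affine G R (tstar G R + c / n) x
      have h2 := qf_abar_le G x
      have h3 := hbound x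
      have hmul : (c / n) * ((n : ℝ) * ∑ i, x i ^ 2) = c * ∑ i, x i ^ 2 := by
        field_simp
      have hprod := mul_le_mul_of_nonneg_left h2 hcn.le
      linarith
  have hle := le_csSup (SS_bddAbove hG hR1 hR2) hmem
  have htt : sSup (SS G R) = tstar G R := rfl
  rw [htt] at hle
  linarith

lemma cg_kernel {V : Type*} [Fintype V] (G' : SimpleGraph V) (s : ℝ)
    (h0 : Polynomial.eval s (CG G') = 0) :
    ∃ w : Option V → ℝ, w ≠ 0 ∧ ((cmMatrix G').map (Polynomial.eval s)) *ᵥ w = 0 := by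
  have hdet : ((cmMatrix G').map (Polynomial.eval s)).det = 0 := by
    have h1 := RingHom.map_det (Polynomial.evalRingHom s) (cmMatrix G')
    rw [RingHom.mapMatrix_apply] at h1
    have h2 : (cmMatrix G').map ⇑(Polynomial.evalRingHom s)
        = (cmMatrix G').map (Polynomial.eval s) := rfl
    rw [h2] at h1
    rw [← h1]
    simpa [CG] using h0
  exact Matrix.exists_mulVec_eq_zero_iff.mpr hdet

lemma cg_ne_zero (hn : 2 ≤ n) {s : ℝ}
    (hpd : ∀ x : Fin n → ℝ, x ≠ 0 → 0 < qf (mmat G R s) x) :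
    (CG G).eval s ≠ 0 := by
  intro h0
  obtain ⟨w, hw0, hker⟩ := cg_kernel G s h0
  have hrow0 : ∑ u, w (some u) = 0 := by
    have h := congrFun hker none
    simpa [Matrix.mulVec, dotProduct, cmMatrix, Fintype.sum_option,
      Matrix.map_apply] using h
  have hrow : ∀ u : Fin n, w none + ∑ v, qmat G s u v * w (some v) = 0 := by
    intro u
    have h := congrFun hker (some u)
    have hone : Polynomial.eval s (cmMatrix G (some u) none) = 1 := by simp [cmMatrix]
    have heval : ∀ v : Fin n,
        Polynomial.eval s (cmMatrix G (some u) (some v)) * w (some v)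
          = qmat G s u v * w (some v) := by
      intro v
      rcases eq_or_ne u v with hv | hv
      · simp [cmMatrix, qmat, hv]
      · by_cases hadj : G.Adj u v <;> simp [cmMatrix, qmat, hv, hadj]
    simp only [Matrix.mulVec, dotProduct, Fintype.sum_option, Matrix.map_apply,
      hone, one_mul, Pi.zero_apply, heval] at h
    exact h
  by_cases hyz : (fun u => w (some u)) = (0 : Fin n → ℝ)
  · have ha0 : w none = 0 := by
      have hu := hrow ⟨0, by omega⟩
      have : ∀ v : Fin n, w (some v) = 0 := fun v => congrFun hyz v
      simp [this] at hu
      exact hu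
    apply hw0
    funext k
    cases k with
    | none => exact ha0
    | some u => exact congrFun hyz u
  · have hq : (fun u => w (some u)) ⬝ᵥ (qmat G s *ᵥ fun u => w (some u)) = 0 := by
      have hstep : ∀ u : Fin n, ∑ v, qmat G s u v * w (some v) = -(w none) := by
        intro u
        linarith [hrow u]
      calc (fun u => w (some u)) ⬝ᵥ (qmat G s *ᵥ fun u => w (some u))
          = ∑ u, w (some u) * (∑ v, qmat G s u v * w (some v)) := by
            simp [dotProduct, Matrix.mulVec]
        _ = ∑ u, w (some u) * (-(w none)) :=
            Finset.sum_congr rfl fun u _ => by rw [hstep u]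
        _ = (∑ u, w (some u)) * (-(w none)) := by rw [Finset.sum_mul]
        _ = 0 := by rw [hrow0]; ring
    have hqf : qf (mmat G R s) (fun u => w (some u)) = 0 := by
      rw [qf_split, hrow0, hq]
      ring
    exact absurd hqf (ne_of_gt (hpd _ hyz))

end Stmt7Aux

namespace Stmt7Aux

variable {n : ℕ}

/-- Padding a Euclidean space into a higher-dimensional one, as a linear map. -/
def padMap (r m : ℕ) : EuclideanSpace ℝ (Fin r) →ₗ[ℝ] EuclideanSpace ℝ (Fin m) where
  toFun x := WithLp.toLp 2 (fun j => if hj : (j : ℕ) < r then x ⟨j, hj⟩ else 0)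
  map_add' x y := by
    ext j
    by_cases hj : (j : ℕ) < r <;> simp [hj, PiLp.add_apply]
  map_smul' c x := by
    ext j
    by_cases hj : (j : ℕ) < r <;> simp [hj, PiLp.smul_apply]

lemma padMap_norm (r m : ℕ) (h : r ≤ m) (x : EuclideanSpace ℝ (Fin r)) :
    ‖padMap r m x‖ = ‖x‖ := by
  rw [EuclideanSpace.norm_eq, EuclideanSpace.norm_eq]
  congr 1
  have hzero : ∀ j ∈ (Finset.univ : Finset (Fin m)),
      j ∉ (Finset.univ : Finset (Fin r)).map (Fin.castLEEmb h) →
      ‖padMap r m x j‖ ^ 2 = 0 := by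
    intro j _ hj
    have hnlt : ¬ ((j : ℕ) < r) := by
      intro hlt
      exact hj (Finset.mem_map.mpr ⟨⟨(j : ℕ), hlt⟩, Finset.mem_univ _, by
        simp [Fin.castLEEmb, Fin.castLE]⟩)
    simp [padMap, hnlt]
  rw [← Finset.sum_subset (Finset.subset_univ _) hzero, Finset.sum_map]
  refine Finset.sum_congr rfl fun i _ => ?_
  have hi : ((Fin.castLEEmb h i : Fin m) : ℕ) < r := by
    simpa [Fin.castLEEmb, Fin.castLE] using i.2
  simp [padMap, hi, Fin.castLEEmb, Fin.castLE]

/-- Padding as a linear isometry. -/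
def padLI (r m : ℕ) (h : r ≤ m) :
    EuclideanSpace ℝ (Fin r) →ₗᵢ[ℝ] EuclideanSpace ℝ (Fin m) :=
  ⟨padMap r m, padMap_norm r m h⟩

lemma qf_gram {d : ℕ} (b : Fin n → EuclideanSpace ℝ (Fin d))
    (M : Matrix (Fin n) (Fin n) ℝ)
    (h : ∀ u v, ⟪b u, b v⟫ = M u v) (z : Fin n → ℝ) :
    qf M z = ⟪∑ u, z u • b u, ∑ v, z v • b v⟫ := by
  rw [qf_expand, sum_inner]
  refine Finset.sum_congr rfl fun u _ => ?_
  rw [real_inner_smul_left, inner_sum, Finset.mul_sum]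
  refine Finset.sum_congr rfl fun v _ => ?_
  rw [real_inner_smul_right, h u v]
  ring

end Stmt7Aux


set_option maxHeartbeats 1600000 in
/-- For a non-complete graph `G` on `n ≥ 2` vertices and
`√((n-1)/n) < R ≤ 1`, there is exactly one `x > √2` with `C_G ≠ 0` on `(1, x²/2)` such that
`G` has a two-distance representation in `ℝ^{n-1}` with distances `√2` and `x` lying on a
sphere of radius `R`. -/
theorem exists_unique_rep_on_sphere (n : ℕ) (hn : 2 ≤ n) (G : SimpleGraph (Fin n))
    (hG : G ≠ ⊤) (R : ℝ)
    (hR1 : Real.sqrt (((n : ℝ) - 1) / n) < R) (hR2 : R ≤ 1) :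
    ∃! x : ℝ, Real.sqrt 2 < x ∧
      (∀ s : ℝ, 1 < s → s < x ^ 2 / 2 → (CG G).eval s ≠ 0) ∧
      ∃ (f : Fin n → EuclideanSpace ℝ (Fin (n - 1)))
        (c : EuclideanSpace ℝ (Fin (n - 1))),
        IsTwoDistRep G f (Real.sqrt 2) x ∧ ∀ v, dist c (f v) = R := by
  classical
  have hR0 : 0 < R := lt_of_le_of_lt (Real.sqrt_nonneg _) hR1
  set t := Stmt7Aux.tstar G R with ht
  have htmem := Stmt7Aux.tstar_mem hn hG hR1 hR2
  have ht1 : 1 < t := Stmt7Aux.tstar_gt_one hn hG hR1 hR2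
  set x := Real.sqrt (2 * t) with hx
  have hxsq : x ^ 2 = 2 * t := Real.sq_sqrt (by linarith)
  have hx2 : Real.sqrt 2 < x := by
    apply Real.sqrt_lt_sqrt (by norm_num)
    linarith
  have hxpos : 0 < x := lt_trans (Real.sqrt_pos.mpr two_pos) hx2
  have hsqrt2pos : (0 : ℝ) < Real.sqrt 2 := Real.sqrt_pos.mpr two_pos
  refine ⟨x, ⟨hx2, ?_, ?_⟩, ?_⟩
  · -- (a): no root of C_G in (1, x²/2)
    intro s hs1 hs2
    rw [hxsq] at hs2
    have hst : s < t := by linarith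
    exact Stmt7Aux.cg_ne_zero hn
      (fun y hy => Stmt7Aux.pd_of_lt hn hG hR1 hR2 (le_of_lt hs1) hst hy)
  · -- (b): existence of the representation
    obtain ⟨B, hB⟩ : ∃ B : Matrix (Fin n) (Fin n) ℝ, Stmt7Aux.mmat G R t = Bᴴ * B := by
      open scoped MatrixOrder in
      exact CStarAlgebra.nonneg_iff_eq_star_mul_self.mp (Stmt7Aux.tstar_psd hn hG hR1 hR2).nonneg
    set b : Fin n → EuclideanSpace ℝ (Fin n) := fun u => WithLp.toLp 2 (fun i => B i u) with hb
    have hgram : ∀ u v, ⟪b u, b v⟫ = Stmt7Aux.mmat G R t u v := by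
      intro u v
      calc ⟪b u, b v⟫ = ∑ i, B i u * B i v := by
            simp [hb, PiLp.inner_apply, RCLike.inner_apply, conj_trivial]
            exact Finset.sum_congr rfl fun _ _ => mul_comm _ _
        _ = (Bᴴ * B) u v := by
            simp [Matrix.mul_apply, Matrix.conjTranspose_apply]
        _ = Stmt7Aux.mmat G R t u v := by rw [← hB]
    obtain ⟨v₀, hv₀ne, hv₀ker⟩ := Stmt7Aux.exists_kernel hn hG hR1 hR2
    have hBv₀ : B *ᵥ v₀ = 0 := by
      have h1 : v₀ ⬝ᵥ (Stmt7Aux.mmat G R t *ᵥ v₀) = 0 := by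
        rw [hv₀ker]; simp
      rw [hB, ← Matrix.mulVec_mulVec, Matrix.dotProduct_mulVec,
        Matrix.vecMul_conjTranspose] at h1
      have hstar : star v₀ = v₀ := funext fun _ => rfl
      rw [hstar] at h1
      have hstar2 : star (B *ᵥ v₀) = B *ᵥ v₀ := funext fun _ => rfl
      rw [hstar2] at h1
      exact dotProduct_self_eq_zero.mp h1
    have hrel : ∑ u, v₀ u • b u = 0 := by
      ext i
      have h1 : (∑ u, v₀ u • b u) i = ∑ u, v₀ u * B i u := by
        rw [WithLp.ofLp_sum, Finset.sum_apply]
        exact Finset.sum_congr rfl fun u _ => rfl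
      have h2 : ∑ u, v₀ u * B i u = (B *ᵥ v₀) i := by
        simp [Matrix.mulVec, dotProduct, mul_comm]
      rw [h1, h2, hBv₀]
      rfl
    have hnli : ¬ LinearIndependent ℝ b := by
      intro hli
      rw [Fintype.linearIndependent_iff] at hli
      obtain ⟨u, hu⟩ := Function.ne_iff.mp hv₀ne
      exact hu (hli v₀ hrel u)
    have hfr : (Set.range b).finrank ℝ ≤ n - 1 := by
      have hne : (Set.range b).finrank ℝ ≠ n := by
        intro h
        exact hnli (linearIndependent_iff_card_eq_finrank_span.mpr (by
          rw [h, Fintype.card_fin]))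
      have hle : (Set.range b).finrank ℝ ≤ Fintype.card (Fin n) :=
        finrank_range_le_card b
      rw [Fintype.card_fin] at hle
      omega
    set W := Submodule.span ℝ (Set.range b) with hW
    have hmemW : ∀ u, b u ∈ W := fun u => Submodule.subset_span (Set.mem_range_self u)
    have hrle : Module.finrank ℝ W ≤ n - 1 := hfr
    set T := (stdOrthonormalBasis ℝ W).repr with hT
    set pad := Stmt7Aux.padLI (Module.finrank ℝ W) (n - 1) hrle with hpad
    set f : Fin n → EuclideanSpace ℝ (Fin (n - 1)) :=
      fun u => pad (T ⟨b u, hmemW u⟩) with hf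
    have hnormb : ∀ u, ‖b u‖ = R := by
      intro u
      have h1 : ‖b u‖ ^ 2 = R ^ 2 := by
        rw [← real_inner_self_eq_norm_sq, hgram u u]
        simp [Stmt7Aux.mmat, Stmt7Aux.qmat]
      calc ‖b u‖ = Real.sqrt (‖b u‖ ^ 2) := (Real.sqrt_sq (norm_nonneg _)).symm
        _ = Real.sqrt (R ^ 2) := by rw [h1]
        _ = R := Real.sqrt_sq hR0.le
    have hdistf : ∀ u v, dist (f u) (f v) = dist (b u) (b v) := by
      intro u v
      calc dist (f u) (f v) = dist (T ⟨b u, hmemW u⟩) (T ⟨b v, hmemW v⟩) :=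
            pad.dist_map _ _
        _ = dist (⟨b u, hmemW u⟩ : W) (⟨b v, hmemW v⟩ : W) := T.dist_map _ _
        _ = dist (b u) (b v) := rfl
    have hdistsq : ∀ u v, dist (b u) (b v) ^ 2 = 2 * Stmt7Aux.qmat G t u v := by
      intro u v
      rw [dist_eq_norm, norm_sub_sq_real, hgram u v, hnormb u, hnormb v]
      simp [Stmt7Aux.mmat]
      ring
    refine ⟨f, 0, ⟨hsqrt2pos, le_of_lt hx2, ?_, ?_⟩, ?_⟩
    · intro u v huv
      rw [hdistf]
      have h2 : dist (b u) (b v) ^ 2 = 2 := by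
        rw [hdistsq]
        simp [Stmt7Aux.qmat, huv, huv.ne]
      calc dist (b u) (b v) = Real.sqrt (dist (b u) (b v) ^ 2) :=
            (Real.sqrt_sq dist_nonneg).symm
        _ = Real.sqrt 2 := by rw [h2]
    · intro u v huv hnadj
      rw [hdistf]
      have h2 : dist (b u) (b v) ^ 2 = 2 * t := by
        rw [hdistsq]
        simp [Stmt7Aux.qmat, huv, hnadj]
      calc dist (b u) (b v) = Real.sqrt (dist (b u) (b v) ^ 2) :=
            (Real.sqrt_sq dist_nonneg).symm
        _ = x := by rw [h2]
    · intro v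
      rw [dist_zero_left]
      calc ‖f v‖ = ‖T ⟨b v, hmemW v⟩‖ := pad.norm_map _
        _ = ‖(⟨b v, hmemW v⟩ : W)‖ := T.norm_map _
        _ = ‖b v‖ := rfl
        _ = R := hnormb v
  · -- uniqueness
    rintro x' ⟨hx'gt, _hx'a, f', c', ⟨_hpos', _hle', hadj', hnonadj'⟩, hsph'⟩
    have hx'pos : 0 < x' := lt_trans hsqrt2pos hx'gt
    set t' := x' ^ 2 / 2 with ht'
    have hx'sq : 2 < x' ^ 2 := by
      have h := Real.sq_sqrt (show (0:ℝ) ≤ 2 by norm_num)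
      nlinarith [Real.sqrt_nonneg 2]
    have ht'1 : 1 < t' := by rw [ht']; linarith
    set b' : Fin n → EuclideanSpace ℝ (Fin (n - 1)) := fun u => f' u - c' with hb'
    have hnorm' : ∀ u, ‖b' u‖ = R := by
      intro u
      rw [hb']
      calc ‖f' u - c'‖ = dist (f' u) c' := (dist_eq_norm _ _).symm
        _ = dist c' (f' u) := dist_comm _ _
        _ = R := hsph' u
    have hgram' : ∀ u v, ⟪b' u, b' v⟫ = Stmt7Aux.mmat G R t' u v := by
      intro u v
      have hsub : b' u - b' v = f' u - f' v := by
        simp only [hb']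
        abel
      have hkey := norm_sub_sq_real (b' u) (b' v)
      rw [hsub] at hkey
      have hnormsub : ‖f' u - f' v‖ = dist (f' u) (f' v) := (dist_eq_norm _ _).symm
      rw [hnormsub, hnorm' u, hnorm' v] at hkey
      rcases eq_or_ne u v with rfl | huv
      · have hz : dist (f' u) (f' u) = 0 := dist_self _
        rw [hz] at hkey
        have : ⟪b' u, b' u⟫ = R ^ 2 := by nlinarith
        rw [this]
        simp [Stmt7Aux.mmat, Stmt7Aux.qmat]
      · by_cases hadj : G.Adj u v
        · have hd : dist (f' u) (f' v) = Real.sqrt 2 := hadj' u v hadj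
          rw [hd, Real.sq_sqrt (by norm_num : (0:ℝ) ≤ 2)] at hkey
          have hval : Stmt7Aux.mmat G R t' u v = R ^ 2 - 1 := by
            simp [Stmt7Aux.mmat, Stmt7Aux.qmat, huv, hadj]
          rw [hval]
          nlinarith
        · have hd : dist (f' u) (f' v) = x' := hnonadj' u v huv hadj
          rw [hd] at hkey
          have hval : Stmt7Aux.mmat G R t' u v = R ^ 2 - t' := by
            simp [Stmt7Aux.mmat, Stmt7Aux.qmat, huv, hadj]
          rw [hval, ht']
          nlinarith
    have hpsd' : ∀ z : Fin n → ℝ, 0 ≤ Stmt7Aux.qf (Stmt7Aux.mmat G R t') z := by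
      intro z
      have hgg := Stmt7Aux.qf_gram b' (Stmt7Aux.mmat G R t') hgram' z
      rw [hgg]
      exact real_inner_self_nonneg
    have hnli' : ¬ LinearIndependent ℝ b' := by
      intro hli
      have h1 : Module.finrank ℝ (Submodule.span ℝ (Set.range b')) = n := by
        rw [finrank_span_eq_card hli, Fintype.card_fin]
      have h2 := Submodule.finrank_le (Submodule.span ℝ (Set.range b'))
      rw [finrank_euclideanSpace_fin] at h2
      omega
    obtain ⟨g, hgrel, u₁, hgu⟩ := Fintype.not_linearIndependent_iff.mp hnli'
    have hg0 : g ≠ 0 := fun h => hgu (congrFun h u₁)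
    have hker' : Stmt7Aux.mmat G R t' *ᵥ g = 0 := by
      funext u
      have h1 : (Stmt7Aux.mmat G R t' *ᵥ g) u = ⟪b' u, ∑ v, g v • b' v⟫ := by
        rw [inner_sum]
        simp only [real_inner_smul_right]
        simp only [Matrix.mulVec, dotProduct]
        exact Finset.sum_congr rfl fun v _ => by rw [hgram' u v]; ring
      rw [h1, hgrel, inner_zero_right]
      rfl
    have ht'S : t' ∈ Stmt7Aux.SS G R := ⟨le_of_lt ht'1, hpsd'⟩
    have ht'le : t' ≤ t := le_csSup (Stmt7Aux.SS_bddAbove hG hR1 hR2) ht'S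
    have ht'eq : t' = t := by
      by_contra hne
      have hlt : t' < t := lt_of_le_of_ne ht'le hne
      have hq0 : Stmt7Aux.qf (Stmt7Aux.mmat G R t') g = 0 := by
        rw [Stmt7Aux.qf, hker']
        simp
      exact absurd hq0
        (ne_of_gt (Stmt7Aux.pd_of_lt hn hG hR1 hR2 (le_of_lt ht'1) hlt hg0))
    have hxx : x' = Real.sqrt (2 * t') := by
      rw [show 2 * t' = x' ^ 2 by rw [ht']; ring]
      exact (Real.sqrt_sq hx'pos.le).symm
    rw [hxx, ht'eq]
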